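/- Let a1, a2, a3 be elements of SU(2) with a1·a2·a3 = I, and suppose the eigenvalues of a_j are -e^{iC_j} and -e^{-iC_j} for real numbers C_j (j=1,2,3). Then cos²C₁ + cos²C₂ + cos²C₃ + 2·cosC₁·cosC₂·cosC₃ ≤ 1. -/
import Mathlib

open Complex Matrix

private lemma su2_struct (a : Matrix.specialUnitaryGroup (Fin 2) ℂ) :
    (a : Matrix (Fin 2) (Fin 2) ℂ) 1 1 = (starRingEnd ℂ) ((a : Matrix (Fin 2) (Fin 2) ℂ) 0 0) ∧
    (a : Matrix (Fin 2) (Fin 2) ℂ) 1 0 = -(starRingEnd ℂ) ((a : Matrix (Fin 2) (Fin 2) ℂ) 0 1) := by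
  set A := (a : Matrix (Fin 2) (Fin 2) ℂ) with hA
  have hmem := a.2
  rw [Matrix.mem_specialUnitaryGroup_iff] at hmem
  obtain ⟨hu, hdet⟩ := hmem
  have h1 : star A * A = 1 := (Matrix.mem_unitaryGroup_iff'.mp hu)
  have h2 : A * A.adjugate = 1 := by rw [Matrix.mul_adjugate, hdet, one_smul]
  have hstar : star A = A.adjugate := by
    calc star A = star A * (A * A.adjugate) := by rw [h2, mul_one]
    _ = (star A * A) * A.adjugate := by rw [mul_assoc]
    _ = A.adjugate := by rw [h1, one_mul]
  have hadj := Matrix.adjugate_fin_two A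
  constructor
  · have := congrFun (congrFun hstar 0) 0
    rw [hadj] at this
    simpa [Matrix.star_apply] using this.symm
  · have h' := congrFun (congrFun hstar 1) 0
    rw [hadj] at h'
    have h'' : (starRingEnd ℂ) (A 0 1) = -A 1 0 := by
      simpa [Matrix.star_apply] using h'
    linear_combination h''

private lemma su2_trace (a : Matrix.specialUnitaryGroup (Fin 2) ℂ) (C : ℝ)
    (h : spectrum ℂ (a : Matrix (Fin 2) (Fin 2) ℂ) =
      {-Complex.exp (Complex.I * C), -Complex.exp (-(Complex.I * C))}) :
    ((a : Matrix (Fin 2) (Fin 2) ℂ) 0 0).re = -Real.cos C := by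
  set A := (a : Matrix (Fin 2) (Fin 2) ℂ) with hA
  have hdet : A.det = 1 := (Matrix.mem_specialUnitaryGroup_iff.mp a.2).2
  have hmem : -Complex.exp (Complex.I * C) ∈ spectrum ℂ A := by
    rw [h]; left; rfl
  rw [spectrum.mem_iff, Matrix.isUnit_iff_isUnit_det, isUnit_iff_ne_zero, not_not] at hmem
  rw [Matrix.det_fin_two] at hmem hdet
  simp [Matrix.algebraMap_eq_diagonal] at hmem
  set lam := -Complex.exp (Complex.I * C) with hlam
  have heq : lam ^ 2 - A.trace * lam + 1 = 0 := by
    rw [Matrix.trace_fin_two]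
    linear_combination hmem - hdet
  set u := Complex.exp (Complex.I * C) with hu
  set v := Complex.exp (-(Complex.I * C)) with hv
  have huv : u * v = 1 := by rw [hu, hv, ← Complex.exp_add]; simp
  have hkey : (A.trace + (u + v)) * u = 0 := by
    have h5 : lam ^ 2 - A.trace * lam + 1 = u ^ 2 + A.trace * u + 1 := by rw [hlam]; ring
    rw [h5] at heq
    linear_combination heq + huv
  have hune : u ≠ 0 := Complex.exp_ne_zero _
  have htr : A.trace = -(u + v) := by
    rcases mul_eq_zero.mp hkey with h' | h'
    · linear_combination h'
    · exact absurd h' hune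
  have hcos : u + v = 2 * (Real.cos C : ℂ) := by
    rw [Complex.ofReal_cos, Complex.cos, hu, hv]
    ring_nf
  have h11 := (su2_struct a).1
  rw [← hA] at h11
  have htrace : A.trace = -(2 * (Real.cos C : ℂ)) := by rw [htr, hcos]
  rw [Matrix.trace_fin_two, h11] at htrace
  have hre := congrArg Complex.re htrace
  simp [Complex.add_re, Complex.conj_re, Complex.ofReal_re, Complex.cos_ofReal_re] at hre
  linarith

theorem su2_trace_inequality
    (a₁ a₂ a₃ : Matrix.specialUnitaryGroup (Fin 2) ℂ) (C₁ C₂ C₃ : ℝ)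
    (hprod : a₁ * a₂ * a₃ = 1)
    (h₁ : spectrum ℂ (a₁ : Matrix (Fin 2) (Fin 2) ℂ) =
      {-Complex.exp (Complex.I * C₁), -Complex.exp (-(Complex.I * C₁))})
    (h₂ : spectrum ℂ (a₂ : Matrix (Fin 2) (Fin 2) ℂ) =
      {-Complex.exp (Complex.I * C₂), -Complex.exp (-(Complex.I * C₂))})
    (h₃ : spectrum ℂ (a₃ : Matrix (Fin 2) (Fin 2) ℂ) =
      {-Complex.exp (Complex.I * C₃), -Complex.exp (-(Complex.I * C₃))}) :
    Real.cos C₁ ^ 2 + Real.cos C₂ ^ 2 + Real.cos C₃ ^ 2 +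
      2 * Real.cos C₁ * Real.cos C₂ * Real.cos C₃ ≤ 1 := by
  obtain ⟨e11, e10⟩ := su2_struct a₁
  obtain ⟨f11, f10⟩ := su2_struct a₂
  obtain ⟨g11, g10⟩ := su2_struct a₃
  have r₁ := su2_trace a₁ C₁ h₁
  have r₂ := su2_trace a₂ C₂ h₂
  have r₃ := su2_trace a₃ C₃ h₃
  have d₁ : ((a₁ : Matrix (Fin 2) (Fin 2) ℂ)).det = 1 :=
    (Matrix.mem_specialUnitaryGroup_iff.mp a₁.2).2
  have d₂ : ((a₂ : Matrix (Fin 2) (Fin 2) ℂ)).det = 1 :=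
    (Matrix.mem_specialUnitaryGroup_iff.mp a₂.2).2
  rw [Matrix.det_fin_two, e11, e10] at d₁
  rw [Matrix.det_fin_two, f11, f10] at d₂
  have hpm : (a₁ : Matrix (Fin 2) (Fin 2) ℂ) * a₂ * a₃ = 1 := by
    have := congrArg (Subtype.val) hprod
    simpa using this
  have h3inv : (a₃ : Matrix (Fin 2) (Fin 2) ℂ) * star (a₃ : Matrix (Fin 2) (Fin 2) ℂ) = 1 :=
    Matrix.mem_unitaryGroup_iff.mp (Matrix.mem_specialUnitaryGroup_iff.mp a₃.2).1
  have hAB : (a₁ : Matrix (Fin 2) (Fin 2) ℂ) * a₂ = star (a₃ : Matrix (Fin 2) (Fin 2) ℂ) := by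
    calc (a₁ : Matrix (Fin 2) (Fin 2) ℂ) * a₂
        = ((a₁ : Matrix (Fin 2) (Fin 2) ℂ) * a₂) * ((a₃ : Matrix (Fin 2) (Fin 2) ℂ) * star (a₃ : Matrix (Fin 2) (Fin 2) ℂ)) := by
          rw [h3inv, mul_one]
    _ = ((a₁ : Matrix (Fin 2) (Fin 2) ℂ) * a₂ * a₃) * star (a₃ : Matrix (Fin 2) (Fin 2) ℂ) := by
          rw [← mul_assoc]
    _ = star (a₃ : Matrix (Fin 2) (Fin 2) ℂ) := by rw [hpm, one_mul]
  have htr : ((a₁ : Matrix (Fin 2) (Fin 2) ℂ) * a₂).trace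
      = (star (a₃ : Matrix (Fin 2) (Fin 2) ℂ)).trace := by rw [hAB]
  rw [Matrix.trace_fin_two, Matrix.trace_fin_two] at htr
  simp only [Matrix.mul_apply, Fin.sum_univ_two, Matrix.star_apply] at htr
  rw [e11, e10, f11, f10, g11] at htr
  have hre := congrArg Complex.re htr
  have dr₁ := congrArg Complex.re d₁
  have dr₂ := congrArg Complex.re d₂
  simp [Complex.add_re, Complex.mul_re, Complex.mul_im, Complex.conj_re, Complex.conj_im,
    Complex.neg_re, Complex.neg_im, Complex.one_re, Complex.star_def] at hre dr₁ dr₂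
  set x₁ := Real.cos C₁; set x₂ := Real.cos C₂; set x₃ := Real.cos C₃
  set p₁ := ((a₁ : Matrix (Fin 2) (Fin 2) ℂ) 0 1).re
  set q₁ := ((a₁ : Matrix (Fin 2) (Fin 2) ℂ) 0 1).im
  set p₂ := ((a₂ : Matrix (Fin 2) (Fin 2) ℂ) 0 1).re
  set q₂ := ((a₂ : Matrix (Fin 2) (Fin 2) ℂ) 0 1).im
  set u₁ := ((a₁ : Matrix (Fin 2) (Fin 2) ℂ) 0 0).im
  set u₂ := ((a₂ : Matrix (Fin 2) (Fin 2) ℂ) 0 0).im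
  rw [r₁] at hre dr₁
  rw [r₂] at hre dr₂
  rw [r₃] at hre
  clear_value x₁ x₂ x₃ p₁ q₁ p₂ q₂ u₁ u₂
  clear htr d₁ d₂ hpm h3inv hAB e11 e10 f11 f10 g11 g10 r₁ r₂ r₃ h₁ h₂ h₃ hprod a₁ a₂ a₃
  have heq2 : u₁ * u₂ + p₁ * p₂ + q₁ * q₂ = x₁ * x₂ + x₃ := by linear_combination -hre / 2
  have hn₁ : u₁ ^ 2 + p₁ ^ 2 + q₁ ^ 2 = 1 - x₁ ^ 2 := by linear_combination dr₁
  have hn₂ : u₂ ^ 2 + p₂ ^ 2 + q₂ ^ 2 = 1 - x₂ ^ 2 := by linear_combination dr₂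
  have key : (x₁ * x₂ + x₃) ^ 2 ≤ (1 - x₁ ^ 2) * (1 - x₂ ^ 2) := by
    rw [← heq2, ← hn₁, ← hn₂]
    nlinarith [sq_nonneg (u₁ * p₂ - u₂ * p₁), sq_nonneg (u₁ * q₂ - u₂ * q₁),
      sq_nonneg (p₁ * q₂ - p₂ * q₁)]
  nlinarith [key]
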